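/- For all p ∈ (1, 1.7], the inequality (4^p + 2)^{1/p}·(2·3^{p/(p−1)} + 1)^{(p−1)/p} ≤ 18 holds. -/

import Mathlib

/-- If `x^n ≤ y^d` then `x^(n/d) ≤ y` (for nonnegative reals). -/
lemma aux_rpow_le_of_pow_le {x y : ℝ} (hx : 0 ≤ x) (hy : 0 ≤ y) (n d : ℕ)
    (hd : 0 < d) (h : x ^ n ≤ y ^ d) : x ^ ((n : ℝ) / d) ≤ y := by
  have hd' : (0:ℝ) < d := by exact_mod_cast hd
  have h1 : x ^ ((n : ℝ) / d) = ((x ^ n : ℝ)) ^ ((1:ℝ) / d) := by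
    rw [← Real.rpow_natCast x n, ← Real.rpow_mul hx]
    ring_nf
  have h2 : ((y ^ d : ℝ)) ^ ((1:ℝ) / d) = y := by
    rw [← Real.rpow_natCast y d, ← Real.rpow_mul hy, mul_one_div, div_self hd'.ne',
      Real.rpow_one]
  rw [h1, ← h2]
  exact Real.rpow_le_rpow (pow_nonneg hx n) h (by positivity)

/-- If `y^d ≤ x^n` then `y ≤ x^(n/d)` (for nonnegative reals). -/
lemma aux_le_rpow_of_pow_le {x y : ℝ} (hx : 0 ≤ x) (hy : 0 ≤ y) (n d : ℕ)
    (hd : 0 < d) (h : y ^ d ≤ x ^ n) : y ≤ x ^ ((n : ℝ) / d) := by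
  have hd' : (0:ℝ) < d := by exact_mod_cast hd
  have h1 : x ^ ((n : ℝ) / d) = ((x ^ n : ℝ)) ^ ((1:ℝ) / d) := by
    rw [← Real.rpow_natCast x n, ← Real.rpow_mul hx]
    ring_nf
  have h2 : ((y ^ d : ℝ)) ^ ((1:ℝ) / d) = y := by
    rw [← Real.rpow_natCast y d, ← Real.rpow_mul hy, mul_one_div, div_self hd'.ne',
      Real.rpow_one]
  rw [h1, ← h2]
  exact Real.rpow_le_rpow (pow_nonneg hy d) h (by positivity)

/-- Convexity of `b^x` in the exponent. -/
lemma aux_rpow_affine_le {b : ℝ} (hb : 0 < b) {u v l : ℝ} (h0 : 0 ≤ l) (h1 : l ≤ 1) :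
    b ^ ((1 - l) * u + l * v) ≤ (1 - l) * b ^ u + l * b ^ v := by
  have key := convexOn_exp.2 (Set.mem_univ (u * Real.log b)) (Set.mem_univ (v * Real.log b))
    (by linarith : (0:ℝ) ≤ 1 - l) h0 (by ring)
  simp only [smul_eq_mul] at key
  rw [Real.rpow_def_of_pos hb, Real.rpow_def_of_pos hb, Real.rpow_def_of_pos hb]
  calc Real.exp (Real.log b * ((1 - l) * u + l * v))
      = Real.exp ((1 - l) * (u * Real.log b) + l * (v * Real.log b)) := by ring_nf
    _ ≤ (1 - l) * Real.exp (u * Real.log b) + l * Real.exp (v * Real.log b) := key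
    _ = (1 - l) * Real.exp (Real.log b * u) + l * Real.exp (Real.log b * v) := by ring_nf

/-- Key convexity estimate: `(104/75)^p + 2·(26/75)^p ≤ 52/25` on `[1, 1.7]`. -/
lemma aux_g_le (p : ℝ) (h1 : 1 ≤ p) (h2 : p ≤ 17/10) :
    (104/75 : ℝ) ^ p + 2 * (26/75 : ℝ) ^ p ≤ 52/25 := by
  set l : ℝ := (p - 1) / (7/10) with hl
  have hl0 : 0 ≤ l := div_nonneg (by linarith) (by norm_num)
  have hl1 : l ≤ 1 := by rw [hl, div_le_one (by norm_num)]; linarith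
  have hpeq : p = (1 - l) * 1 + l * (17/10) := by
    field_simp [hl]; ring
  have hc1 : (104/75 : ℝ) ^ p ≤ (1 - l) * (104/75:ℝ) ^ (1:ℝ) + l * (104/75:ℝ) ^ ((17:ℝ)/10) := by
    rw [hpeq]; exact aux_rpow_affine_le (by norm_num) hl0 hl1
  have hc2 : (26/75 : ℝ) ^ p ≤ (1 - l) * (26/75:ℝ) ^ (1:ℝ) + l * (26/75:ℝ) ^ ((17:ℝ)/10) := by
    rw [hpeq]; exact aux_rpow_affine_le (by norm_num) hl0 hl1
  have hn1 : (104/75 : ℝ) ^ ((17:ℝ)/10) ≤ 17434/10000 := by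
    have := aux_rpow_le_of_pow_le (x := (104/75:ℝ)) (y := (17434/10000:ℝ))
      (by norm_num) (by norm_num) 17 10 (by norm_num) (by norm_num)
    exact_mod_cast this
  have hn2 : (26/75 : ℝ) ^ ((17:ℝ)/10) ≤ 1653/10000 := by
    have := aux_rpow_le_of_pow_le (x := (26/75:ℝ)) (y := (1653/10000:ℝ))
      (by norm_num) (by norm_num) 17 10 (by norm_num) (by norm_num)
    exact_mod_cast this
  rw [Real.rpow_one] at hc1 hc2
  nlinarith [hc1, hc2, hn1, hn2, hl0, hl1]

/-- Lemma A: `4^p + 2 ≤ 6^p · (52/25)^(1-p)` on `[1, 1.7]`. -/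
lemma aux_A (p : ℝ) (h1 : 1 ≤ p) (h2 : p ≤ 17/10) :
    (4 : ℝ) ^ p + 2 ≤ (6:ℝ) ^ p * (52/25 : ℝ) ^ (1 - p) := by
  have hg := aux_g_le p h1 h2
  have hrp : (0:ℝ) < (52/25:ℝ) ^ p := Real.rpow_pos_of_pos (by norm_num) p
  have hsplit : (52/25 : ℝ) ^ (1 - p) = (52/25) * ((52/25:ℝ) ^ p)⁻¹ := by
    rw [show (1:ℝ) - p = 1 + (-p) by ring, Real.rpow_add (by norm_num), Real.rpow_one,
      Real.rpow_neg (by norm_num)]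
  have e1 : (6:ℝ) ^ p * (104/75 : ℝ) ^ p = (52/25:ℝ) ^ p * (4:ℝ) ^ p := by
    rw [← Real.mul_rpow (by norm_num) (by norm_num),
      ← Real.mul_rpow (by norm_num) (by norm_num)]
    norm_num
  have e2 : (6:ℝ) ^ p * (26/75 : ℝ) ^ p = (52/25:ℝ) ^ p := by
    rw [← Real.mul_rpow (by norm_num) (by norm_num)]
    norm_num
  have h6p : (0:ℝ) < (6:ℝ) ^ p := Real.rpow_pos_of_pos (by norm_num) p
  have key := mul_le_mul_of_nonneg_left hg (le_of_lt h6p)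
  -- 6^p * (g p) ≤ 6^p * (52/25)
  have lhs_eq : (6:ℝ) ^ p * ((104/75 : ℝ) ^ p + 2 * (26/75 : ℝ) ^ p)
      = (52/25:ℝ) ^ p * ((4:ℝ) ^ p + 2) := by
    rw [mul_add]
    rw [show (6:ℝ)^p * (2 * (26/75:ℝ)^p) = 2 * ((6:ℝ)^p * (26/75:ℝ)^p) by ring, e2]
    rw [e1]; ring
  rw [lhs_eq] at key
  rw [hsplit, show (6:ℝ)^p * (52/25 * ((52/25:ℝ)^p)⁻¹) = 6^p * (52/25) / ((52/25:ℝ)^p) by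
    field_simp, le_div_iff₀ hrp]
  nlinarith [key]
  
/-- For all `p ∈ (1, 1.7]`,
`(4^p + 2)^{1/p}·(2·3^{p/(p−1)} + 1)^{(p−1)/p} ≤ 18`. -/
theorem product_le_eighteen (p : ℝ) (hp1 : 1 < p) (hp2 : p ≤ 1.7) :
    ((4 : ℝ) ^ p + 2) ^ (1 / p)
        * (2 * (3 : ℝ) ^ (p / (p - 1)) + 1) ^ ((p - 1) / p) ≤ 18 := by
  have hp0 : (0:ℝ) < p := lt_trans one_pos hp1
  have hp1' : (0:ℝ) < p - 1 := by linarith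
  have hp2' : p ≤ 17/10 := by norm_num at hp2 ⊢; linarith
  set q : ℝ := p / (p - 1) with hqdef
  have hq1 : q * ((p - 1) / p) = 1 := by rw [hqdef]; field_simp
  have h4p2 : (0:ℝ) < 4 ^ p + 2 := by positivity
  have h3q : (0:ℝ) < (3:ℝ) ^ q := Real.rpow_pos_of_pos (by norm_num) q
  -- Factor 1
  have hA := aux_A p (le_of_lt hp1) hp2'
  have hF1 : ((4 : ℝ) ^ p + 2) ^ (1 / p) ≤ 6 * (52/25 : ℝ) ^ ((1 - p) / p) := by
    calc ((4 : ℝ) ^ p + 2) ^ (1 / p)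
        ≤ ((6:ℝ) ^ p * (52/25 : ℝ) ^ (1 - p)) ^ (1 / p) :=
          Real.rpow_le_rpow (le_of_lt h4p2) hA (by positivity)
      _ = 6 * (52/25 : ℝ) ^ ((1 - p) / p) := by
          rw [Real.mul_rpow (by positivity) (by positivity),
            ← Real.rpow_mul (by norm_num : (0:ℝ) ≤ 6),
            ← Real.rpow_mul (by norm_num : (0:ℝ) ≤ 52/25),
            mul_one_div, div_self hp0.ne', Real.rpow_one, mul_one_div]
  -- Factor 2
  have hq17 : (17:ℝ)/7 ≤ q := by
    rw [hqdef, le_div_iff₀ hp1']; linarith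
  have h3q25 : (25/2 : ℝ) ≤ (3:ℝ) ^ q := by
    calc (25/2 : ℝ) ≤ (3:ℝ) ^ ((17:ℝ)/7) := by
          have := aux_le_rpow_of_pow_le (x := (3:ℝ)) (y := (25/2:ℝ))
            (by norm_num) (by norm_num) 17 7 (by norm_num) (by norm_num)
          exact_mod_cast this
      _ ≤ (3:ℝ) ^ q := Real.rpow_le_rpow_of_exponent_le (by norm_num) hq17
  have hB : 2 * (3:ℝ) ^ q + 1 ≤ (52/25 : ℝ) * (3:ℝ) ^ q := by linarith
  have hF2 : (2 * (3:ℝ) ^ q + 1) ^ ((p - 1) / p) ≤ (52/25 : ℝ) ^ ((p - 1) / p) * 3 := by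
    calc (2 * (3:ℝ) ^ q + 1) ^ ((p - 1) / p)
        ≤ ((52/25 : ℝ) * (3:ℝ) ^ q) ^ ((p - 1) / p) :=
          Real.rpow_le_rpow (by positivity) hB (by positivity)
      _ = (52/25 : ℝ) ^ ((p - 1) / p) * 3 := by
          rw [Real.mul_rpow (by norm_num) (le_of_lt h3q),
            ← Real.rpow_mul (by norm_num : (0:ℝ) ≤ 3), hq1, Real.rpow_one]
  -- Combine
  have hmain : ((4 : ℝ) ^ p + 2) ^ (1 / p) * (2 * (3:ℝ) ^ q + 1) ^ ((p - 1) / p)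
      ≤ (6 * (52/25 : ℝ) ^ ((1 - p) / p)) * ((52/25 : ℝ) ^ ((p - 1) / p) * 3) := by
    apply mul_le_mul hF1 hF2 (by positivity) (by positivity)
  calc ((4 : ℝ) ^ p + 2) ^ (1 / p) * (2 * (3:ℝ) ^ q + 1) ^ ((p - 1) / p)
      ≤ (6 * (52/25 : ℝ) ^ ((1 - p) / p)) * ((52/25 : ℝ) ^ ((p - 1) / p) * 3) := hmain
    _ = 18 * ((52/25 : ℝ) ^ ((1 - p) / p + (p - 1) / p)) := by
        rw [Real.rpow_add (by norm_num : (0:ℝ) < 52/25)]; ring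
    _ = 18 := by
        rw [show (1 - p) / p + (p - 1) / p = 0 by field_simp; ring, Real.rpow_zero, mul_one]
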